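/- arXiv:2007.05483 — 4 statements merged into one kernel-verified Lean document; each statement's English description precedes it below -/
import Mathlib

section
/- Let n ≥ 1 and m ≥ 0 be integers, let B̃ be an (n+m)×n integer matrix, and let B be its top n×n submatrix. Assume that the only u ∈ ℤⁿ with all entries nonnegative and B·u = 0 is u = 0. Work in the Laurent polynomial ring L = ℚ[x₁^{±1},…,x_{n+m}^{±1}], and let R ⊆ L be the subring ℚ[x_{n+1}^{±1},…,x_{n+m}^{±1}] of Laurent polynomials involving only the last m variables. Suppose (F_k)_{k∈K} is a family of elements of L such that for each index k there exist a vector g̃_k ∈ ℤ^{n+m} and a finitely supported function c_k from the set of vectors e ∈ ℤⁿ with nonnegative entries to ℚ, with c_k(0) ≠ 0, such that F_k = Σ_e c_k(e)·x^{B̃·e + g̃_k}, where x^f denotes the Laurent monomial with exponent vector f ∈ ℤ^{n+m} and B̃·e ∈ ℤ^{n+m} is the matrix–vector product. If the vectors obtained from the g̃_k by keeping only the first n coordinates are pairwise distinct, then the family (F_k)_{k∈K} is linearly independent over R: whenever λ_k ∈ R are almost all zero and Σ_k λ_k·F_k = 0 in L, then every λ_k = 0. -/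
section Aux

variable {n m : ℕ} (B : Matrix (Fin n) (Fin n) ℤ)

/-- the partial-order relation `a ≼ b ↔ b = a + B e` for some nonnegative `e` -/
def CCrel (a b : Fin n → ℤ) : Prop :=
  ∃ e : Fin n → ℤ, (∀ i, 0 ≤ e i) ∧ b = a + B.mulVec e

lemma CCrel_trans {a b d : Fin n → ℤ} (h1 : CCrel B a b) (h2 : CCrel B b d) :
    CCrel B a d := by
  obtain ⟨e, he, rfl⟩ := h1
  obtain ⟨e', he', rfl⟩ := h2
  exact ⟨e + e', fun i => add_nonneg (he i) (he' i), by rw [Matrix.mulVec_add]; abel⟩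

lemma CCrel_antisymm
    (hker : ∀ u : Fin n → ℤ, (∀ i, 0 ≤ u i) → B.mulVec u = 0 → u = 0)
    {a b : Fin n → ℤ} (h1 : CCrel B a b) (h2 : CCrel B b a) : a = b := by
  obtain ⟨e, he, rfl⟩ := h1
  obtain ⟨e', he', h⟩ := h2
  have hsum : B.mulVec (e + e') = 0 := by
    have h' : a + (B.mulVec e + B.mulVec e') = a + 0 := by
      rw [add_zero]; rw [← add_assoc]; exact h.symm
    rw [Matrix.mulVec_add]
    exact (add_left_cancel h')
  have h0 : e + e' = 0 := hker _ (fun i => add_nonneg (he i) (he' i)) hsum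
  have he0 : e = 0 := by
    funext i
    have h1' := congrFun h0 i
    simp only [Pi.add_apply, Pi.zero_apply] at h1'
    have hei := he i; have hei' := he' i
    simp only [Pi.zero_apply]
    omega
  simp [he0]

lemma CCrel_exists_min
    (hker : ∀ u : Fin n → ℤ, (∀ i, 0 ≤ u i) → B.mulVec u = 0 → u = 0)
    (s : Finset (Fin n → ℤ)) (hs : s.Nonempty) :
    ∃ a ∈ s, ∀ b ∈ s, CCrel B b a → b = a := by
  classical
  revert hs
  induction s using Finset.induction_on with
  | empty => intro h; simp at h
  | @insert x s hx ih =>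
    intro _
    rcases s.eq_empty_or_nonempty with rfl | hsne
    · refine ⟨x, by simp, ?_⟩
      intro b hb _
      simpa using hb
    · obtain ⟨a, ha, hamin⟩ := ih hsne
      by_cases hxa : CCrel B x a ∧ x ≠ a
      · refine ⟨x, Finset.mem_insert_self _ _, ?_⟩
        intro b hb hbx
        rcases Finset.mem_insert.mp hb with rfl | hb'
        · rfl
        · exfalso
          have hba : b = a := hamin b hb' (CCrel_trans B hbx hxa.1)
          subst hba
          exact hxa.2 (CCrel_antisymm B hker hxa.1 hbx)
      · refine ⟨a, Finset.mem_insert_of_mem ha, ?_⟩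
        intro b hb hba
        rcases Finset.mem_insert.mp hb with rfl | hb'
        · by_contra hne
          exact hxa ⟨hba, hne⟩
        · exact hamin b hb' hba

end Aux

/-- Linear independence over the coefficient ring of Laurent-polynomial families of
Caldero–Chapoton type: if `Ker B ∩ ℤⁿ₊ = 0` and the truncated `g`-vectors are pairwise
distinct, then the functions `F_k = Σ_e c_k(e) x^{B̃ e + g̃_k}` are linearly independent
over the Laurent polynomials in the last `m` variables. -/
theorem CC_functions_linearly_independent
    (n m : ℕ) (hn : 1 ≤ n)
    (Bt : Matrix (Fin (n + m)) (Fin n) ℤ)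
    (hker : ∀ u : Fin n → ℤ, (∀ i, 0 ≤ u i) →
      (Matrix.submatrix Bt (Fin.castAdd m) id).mulVec u = 0 → u = 0)
    (K : Type*)
    (F : K → AddMonoidAlgebra ℚ (Fin (n + m) → ℤ))
    (g : K → (Fin (n + m) → ℤ))
    (c : K → ((Fin n → ℤ) →₀ ℚ))
    (hcsupp : ∀ k : K, ∀ e : Fin n → ℤ, c k e ≠ 0 → ∀ i, 0 ≤ e i)
    (hc0 : ∀ k : K, c k 0 ≠ 0)
    (hF : ∀ k : K, F k = (c k).sum fun e q =>
      AddMonoidAlgebra.single (Bt.mulVec e + g k) q)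
    (hg : ∀ k k' : K,
      (∀ i : Fin n, g k (Fin.castAdd m i) = g k' (Fin.castAdd m i)) → k = k')
    (lam : K → AddMonoidAlgebra ℚ (Fin (n + m) → ℤ))
    (hlam : ∀ k : K, ∀ f : Fin (n + m) → ℤ, (lam k).coeff f ≠ 0 →
      ∀ i : Fin n, f (Fin.castAdd m i) = 0)
    (S : Finset K)
    (hsum : ∑ k ∈ S, lam k * F k = 0) :
    ∀ k ∈ S, lam k = 0 := by
  classical
  set B : Matrix (Fin n) (Fin n) ℤ := Matrix.submatrix Bt (Fin.castAdd m) id with hB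
  set π : (Fin (n + m) → ℤ) → (Fin n → ℤ) := fun f i => f (Fin.castAdd m i) with hπ
  have hπB : ∀ e : Fin n → ℤ, π (Bt.mulVec e) = B.mulVec e := by
    intro e; funext i
    simp [hπ, hB, Matrix.mulVec, Matrix.submatrix_apply]
  have hπadd : ∀ a b : Fin (n + m) → ℤ, π (a + b) = π a + π b := by
    intro a b; rfl
  have hπsub : ∀ a b : Fin (n + m) → ℤ, π (a - b) = π a - π b := by
    intro a b; rfl
  by_contra hcon
  push_neg at hcon
  obtain ⟨k₁, hk₁S, hk₁⟩ := hcon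
  set T : Finset K := S.filter (fun k => lam k ≠ 0) with hT
  have hTne : T.Nonempty := ⟨k₁, by simp [hT, hk₁S, hk₁]⟩
  obtain ⟨a₀, ha₀, hmin⟩ := CCrel_exists_min B hker (T.image fun k => π (g k)) (hTne.image _)
  obtain ⟨k₀, hk₀T, hk₀a⟩ := Finset.mem_image.mp ha₀
  have hk₀S : k₀ ∈ S := (Finset.mem_filter.mp hk₀T).1
  have hlamk₀ : lam k₀ ≠ 0 := (Finset.mem_filter.mp hk₀T).2
  obtain ⟨f₀, hf₀⟩ : ∃ f₀, (lam k₀).coeff f₀ ≠ 0 := by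
    by_contra h; push_neg at h
    exact hlamk₀ (AddMonoidAlgebra.ext (Finsupp.ext h))
  have hπf₀ : π f₀ = 0 := by
    funext i; exact hlam k₀ f₀ hf₀ i
  set v₀ : Fin (n + m) → ℤ := f₀ + g k₀ with hv₀
  -- coefficient of v₀ in each product
  have hcoeff : ∀ k : K, (lam k * F k).coeff v₀ =
      (c k).sum fun e q => (lam k).coeff (v₀ - (Bt.mulVec e + g k)) * q := by
    intro k
    rw [hF k, Finsupp.mul_sum, AddMonoidAlgebra.coeff_finsuppSum, Finsupp.sum_apply]
    exact Finsupp.sum_congr fun e _ => AddMonoidAlgebra.coeff_mul_single_apply _ _ _ _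
  have hval : ∑ k ∈ S, (lam k * F k).coeff v₀ = 0 := by
    rw [← Finset.sum_apply' v₀, ← AddMonoidAlgebra.coeff_sum, hsum]; rfl
  -- each k ≠ k₀ contributes 0
  have hzero : ∀ k ∈ S, k ≠ k₀ → (lam k * F k).coeff v₀ = 0 := by
    intro k hkS hkne
    rw [hcoeff k]
    rw [Finsupp.sum]
    apply Finset.sum_eq_zero
    intro e he
    by_contra hterm
    have hlamne : (lam k).coeff (v₀ - (Bt.mulVec e + g k)) ≠ 0 :=
      fun h => hterm (by rw [h, zero_mul])
    have hcne : c k e ≠ 0 := Finsupp.mem_support_iff.mp he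
    have hπ0 : π (v₀ - (Bt.mulVec e + g k)) = 0 := by
      funext i; exact hlam k _ hlamne i
    have heq : π (g k₀) = π (g k) + B.mulVec e := by
      have h2 := hπ0
      rw [hπsub, hπadd, hπadd, hπB, hπf₀, sub_eq_zero, zero_add] at h2
      rw [h2, add_comm]
    have hkT : k ∈ T := Finset.mem_filter.mpr ⟨hkS, fun h => hlamne (by rw [h]; rfl)⟩
    have hrel : CCrel B (π (g k)) a₀ := by
      rw [← hk₀a]
      exact ⟨e, hcsupp k e hcne, heq⟩
    have hmem : π (g k) ∈ T.image fun k => π (g k) := Finset.mem_image_of_mem _ hkT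
    have hgk : π (g k) = a₀ := hmin _ hmem hrel
    have : k = k₀ := by
      apply hg
      intro i
      have := congrFun (hgk.trans hk₀a.symm) i
      exact this
    exact hkne this
  have hk₀val : (lam k₀ * F k₀).coeff v₀ = (lam k₀).coeff f₀ * c k₀ 0 := by
    rw [hcoeff k₀]
    rw [Finsupp.sum]
    rw [Finset.sum_eq_single 0]
    · rw [Matrix.mulVec_zero, zero_add, hv₀, add_sub_cancel_right]
    · intro e he hene
      by_contra hterm
      have hlamne : (lam k₀).coeff (v₀ - (Bt.mulVec e + g k₀)) ≠ 0 :=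
        fun h => hterm (by rw [h, zero_mul])
      have hcne : c k₀ e ≠ 0 := Finsupp.mem_support_iff.mp he
      have hπ0 : π (v₀ - (Bt.mulVec e + g k₀)) = 0 := by
        funext i; exact hlam k₀ _ hlamne i
      have hBe : B.mulVec e = 0 := by
        rw [hπsub, hπadd, hπadd, hπB, hπf₀, zero_add, sub_eq_zero] at hπ0
        exact (right_eq_add.mp hπ0)
      exact hene (hker e (hcsupp k₀ e hcne) hBe)
    · intro h0
      rw [Finsupp.notMem_support_iff.mp h0, mul_zero]
  have hfin : (lam k₀).coeff f₀ * c k₀ 0 = 0 := by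
    rw [← hk₀val, ← hval]
    exact (Finset.sum_eq_single_of_mem k₀ hk₀S hzero).symm
  exact (mul_ne_zero hf₀ (hc0 k₀)) hfin
end

section
/- Let Q be a finite loop-free quiver with a gentle system of relations R that is cyclically closed. Let β₁,…,β_{m−1} (with m ≥ 2) be arrows forming a path, i.e., t(β_i) = s(β_{i+1}) for 1 ≤ i ≤ m−2, with (β_i, β_{i+1}) ∉ R for 1 ≤ i ≤ m−2, and let β_m be an arrow with β_m ∉ {β₁, β_{m−1}}, s(β_m) = s(β₁) and t(β_m) = t(β_{m−1}) (so β₁,…,β_m form a bypass). Set j_k := s(β_k) for 1 ≤ k ≤ m−1 and j_m := t(β_{m−1}), and let b_j denote the j-th column of the signed adjacency matrix B of Q and e_j ∈ ℤ^{Q₀} the j-th standard basis vector. Then Σ_{k=1}^{m} b_{j_k} = 2·(e_{j_m} − e_{j_1}) in ℤ^{Q₀}. -/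
open Classical in
/-- Forward bijection for the bypass argument: sends an extra out-arrow at slot `k`
to the corresponding extra in-arrow produced by cyclic closedness. -/
noncomputable def bypassPhi {E : Type*} (R : E → E → Prop) (cyc : ∀ a b, R a b → E)
    (b : ℕ → E) (m : ℕ) (k : ℕ) (e : E) : ℕ × E :=
  if k = m then
    if h : R (b (m - 1)) e then (m - 1, cyc _ _ h)
    else if h2 : R (b m) e then (1, cyc _ _ h2) else (k, e)
  else if h : R (b (k - 1)) e then (k - 1, cyc _ _ h) else (k, e)

open Classical in
/-- Inverse bijection for the bypass argument. -/
noncomputable def bypassPsi {E : Type*} (R : E → E → Prop) (cyc : ∀ a b, R a b → E)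
    (b : ℕ → E) (m : ℕ) (k : ℕ) (e : E) : ℕ × E :=
  if k = 1 then
    if h : R e (b 1) then (2, cyc _ _ h)
    else if h2 : R e (b m) then (m, cyc _ _ h2) else (k, e)
  else if h : R e (b k) then (k + 1, cyc _ _ h) else (k, e)

lemma two_of_ncard_le_two {E : Type*} {S : Set E} (hS : S.Finite) (h2 : S.ncard ≤ 2)
    {x y z : E} (hx : x ∈ S) (hy : y ∈ S) (hz : z ∈ S) (hxy : x ≠ y) : z = x ∨ z = y := by
  by_contra hc
  push_neg at hc
  have hsub : ({x, y, z} : Set E) ⊆ S := by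
    rintro w (rfl | rfl | rfl) <;> assumption
  have hyz : ({y, z} : Set E).ncard = 2 := Set.ncard_pair (Ne.symm hc.2)
  have h3 : ({x, y, z} : Set E).ncard = 3 := by
    rw [Set.ncard_insert_of_notMem (by simp [hxy, Ne.symm hc.1])
      (hS.subset (by rintro w (rfl | rfl) <;> assumption)), hyz]
  have hle := Set.ncard_le_ncard hsub hS
  omega

/-- Bypass column identity for gentle quivers with potential: if `β₁ ⋯ β_{m-1}` is a path
avoiding the relations and `β_m` is a bypass arrow, then the columns of the signed
adjacency matrix at the vertices `j₁ = s(β₁), …, j_{m-1} = s(β_{m-1}), j_m = t(β_{m-1})`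
sum to `2(e_{j_m} - e_{j_1})`. -/
theorem gentle_QP_bypass_column_identity
    (V E : Type*) [DecidableEq V] [Fintype E]
    (s t : E → V)
    (hloop : ∀ a : E, s a ≠ t a)
    (R : E → E → Prop)
    (hRcomp : ∀ a b : E, R a b → t a = s b)
    (hG1s : ∀ v : V, {a : E | s a = v}.ncard ≤ 2)
    (hG1t : ∀ v : V, {a : E | t a = v}.ncard ≤ 2)
    (hG2 : ∀ α β₁ β₂ : E, β₁ ≠ β₂ → s β₁ = t α → s β₂ = t α → Xor' (R α β₁) (R α β₂))
    (hG3 : ∀ α₁ α₂ β : E, α₁ ≠ α₂ → t α₁ = s β → t α₂ = s β → Xor' (R α₁ β) (R α₂ β))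
    (hcyc : ∀ α β : E, R α β → ∃ γ : E, s γ = t β ∧ t γ = s α ∧ R β γ ∧ R γ α)
    (m : ℕ) (hm : 2 ≤ m) (β : ℕ → E)
    (hpath : ∀ i, 1 ≤ i → i ≤ m - 2 → t (β i) = s (β (i + 1)))
    (hnoR : ∀ i, 1 ≤ i → i ≤ m - 2 → ¬ R (β i) (β (i + 1)))
    (hne1 : β m ≠ β 1) (hne2 : β m ≠ β (m - 1))
    (hsm : s (β m) = s (β 1)) (htm : t (β m) = t (β (m - 1))) :
    (∑ k ∈ Finset.Icc 1 m, (fun i : V =>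
        (({a : E | s a = (if k = m then t (β (m - 1)) else s (β k)) ∧ t a = i}.ncard : ℤ) -
         ({a : E | s a = i ∧ t a = (if k = m then t (β (m - 1)) else s (β k))}.ncard : ℤ))))
      = 2 • (Pi.single (t (β (m - 1))) (1 : ℤ) - Pi.single (s (β 1)) 1) := by
  classical
  choose cyc hcs hct hcR1 hcR2 using hcyc
  set J : ℕ → V := fun k => if k = m then t (β (m - 1)) else s (β k) with hJdef
  have hJ : ∀ k, (if k = m then t (β (m - 1)) else s (β k)) = J k := fun _ => rfl
  have hJm : J m = t (β (m - 1)) := if_pos rfl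
  have hJk : ∀ k, k ≠ m → J k = s (β k) := fun k hk => if_neg hk
  have hJ1 : J 1 = s (β 1) := hJk 1 (by omega)
  -- basic uniqueness lemmas
  have L1 : ∀ x y z : E, x ≠ y → s y = s x → s z = s x → z = x ∨ z = y := by
    intro x y z hxy hy hz
    exact two_of_ncard_le_two (Set.toFinite _) (hG1s (s x)) rfl hy hz hxy
  have L2 : ∀ x y z : E, x ≠ y → t y = t x → t z = t x → z = x ∨ z = y := by
    intro x y z hxy hy hz
    exact two_of_ncard_le_two (Set.toFinite _) (hG1t (t x)) rfl hy hz hxy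
  have Runiq_right : ∀ α γ γ' : E, R α γ → R α γ' → γ = γ' := by
    intro α γ γ' h h'
    by_contra hne
    rcases hG2 α γ γ' hne (hRcomp α γ h).symm (hRcomp α γ' h').symm with ⟨_, hn⟩ | ⟨_, hn⟩
    · exact hn h'
    · exact hn h
  have Runiq_left : ∀ γ γ' δ : E, R γ δ → R γ' δ → γ = γ' := by
    intro γ γ' δ h h'
    by_contra hne
    rcases hG3 γ γ' δ hne (hRcomp γ δ h) (hRcomp γ' δ h') with ⟨_, hn⟩ | ⟨_, hn⟩
    · exact hn h'
    · exact hn h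
  -- path facts
  have P1 : ∀ k, 1 ≤ k → k ≤ m - 1 → t (β k) = J (k + 1) := by
    intro k h1 h2
    by_cases h : k + 1 = m
    · have hk : k = m - 1 := by omega
      rw [h, hJm, hk]
    · rw [hJk _ h]
      exact hpath k h1 (by omega)
  have hnoR' : ∀ k, 2 ≤ k → k ≤ m - 1 → ¬ R (β (k - 1)) (β k) := by
    intro k h1 h2 hR
    have hk : k - 1 + 1 = k := by omega
    exact hnoR (k - 1) (by omega) (by omega) (by rwa [hk])
  have hpath' : ∀ k, 2 ≤ k → k ≤ m - 1 → t (β (k - 1)) = s (β k) := by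
    intro k h1 h2
    have hk : k - 1 + 1 = k := by omega
    have := hpath (k - 1) (by omega) (by omega)
    rwa [hk] at this
  have RKey1 : ∀ k γ, 2 ≤ k → k ≤ m - 1 → s γ = J k → γ ≠ β k → R (β (k - 1)) γ := by
    intro k γ h2 hk hs hne
    have hsγ : s γ = t (β (k - 1)) := by
      rw [hs, hJk k (by omega), ← hpath' k h2 hk]
    rcases hG2 (β (k - 1)) (β k) γ (Ne.symm hne) (hpath' k h2 hk).symm hsγ with
      ⟨hR, _⟩ | ⟨hR, _⟩
    · exact absurd hR (hnoR' k h2 hk)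
    · exact hR
  have RKey2 : ∀ k δ, 2 ≤ k → k ≤ m - 1 → t δ = J k → δ ≠ β (k - 1) → R δ (β k) := by
    intro k δ h2 hk ht hne
    have htδ : t δ = s (β k) := by rw [ht, hJk k (by omega)]
    rcases hG3 δ (β (k - 1)) (β k) hne htδ (hpath' k h2 hk) with ⟨hR, _⟩ | ⟨hR, _⟩
    · exact hR
    · exact absurd hR (hnoR' k h2 hk)
  -- the finsets of (slot, arrow) pairs
  set A : Finset (ℕ × E) :=
    (Finset.Icc 1 m ×ˢ Finset.univ).filter (fun p => s p.2 = J p.1) with hAdef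
  set B : Finset (ℕ × E) :=
    (Finset.Icc 1 m ×ˢ Finset.univ).filter (fun p => t p.2 = J p.1) with hBdef
  set A₀ : Finset (ℕ × E) :=
    insert (1, β m) ((Finset.Icc 1 (m - 1)).image fun l => (l, β l)) with hA₀def
  set B₀ : Finset (ℕ × E) :=
    insert (m, β m) ((Finset.Icc 1 (m - 1)).image fun l => (l + 1, β l)) with hB₀def
  have memA : ∀ (k : ℕ) (γ : E), (k, γ) ∈ A ↔ 1 ≤ k ∧ k ≤ m ∧ s γ = J k := by
    intro k γ
    simp only [hAdef, Finset.mem_filter, Finset.mem_product, Finset.mem_Icc,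
      Finset.mem_univ, true_and, and_true]
    tauto
  have memB : ∀ (k : ℕ) (γ : E), (k, γ) ∈ B ↔ 1 ≤ k ∧ k ≤ m ∧ t γ = J k := by
    intro k γ
    simp only [hBdef, Finset.mem_filter, Finset.mem_product, Finset.mem_Icc,
      Finset.mem_univ, true_and, and_true]
    tauto
  have memA₀ : ∀ p : ℕ × E, p ∈ A₀ ↔ p = (1, β m) ∨ ∃ l, 1 ≤ l ∧ l ≤ m - 1 ∧ (l, β l) = p := by
    intro p
    simp only [hA₀def, Finset.mem_insert, Finset.mem_image, Finset.mem_Icc]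
    tauto
  have memB₀ : ∀ p : ℕ × E, p ∈ B₀ ↔ p = (m, β m) ∨
      ∃ l, 1 ≤ l ∧ l ≤ m - 1 ∧ (l + 1, β l) = p := by
    intro p
    simp only [hB₀def, Finset.mem_insert, Finset.mem_image, Finset.mem_Icc]
    tauto
  have hA'elim : ∀ k γ, (k, γ) ∈ A \ A₀ →
      2 ≤ k ∧ k ≤ m ∧ s γ = J k ∧ (k ≤ m - 1 → γ ≠ β k) := by
    intro k γ hmem
    rw [Finset.mem_sdiff, memA, memA₀] at hmem
    obtain ⟨⟨h1, h2, h3⟩, hnd⟩ := hmem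
    push_neg at hnd
    obtain ⟨hnd1, hnd2⟩ := hnd
    have hk2 : 2 ≤ k := by
      rcases Nat.lt_or_ge k 2 with hk | hk
      · exfalso
        have hk1 : k = 1 := by omega
        subst hk1
        have hγ : s γ = s (β 1) := by rwa [hJ1] at h3
        rcases L1 (β 1) (β m) γ (Ne.symm hne1) hsm hγ with rfl | rfl
        · exact hnd2 1 le_rfl (by omega) rfl
        · exact hnd1 rfl
      · exact hk
    refine ⟨hk2, h2, h3, fun hk1 hγ => ?_⟩
    exact hnd2 k (by omega) hk1 (by rw [hγ])
  have hA'intro : ∀ k γ, 2 ≤ k → k ≤ m → s γ = J k → (k ≤ m - 1 → γ ≠ β k) →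
      (k, γ) ∈ A \ A₀ := by
    intro k γ h2 hk hs hne
    rw [Finset.mem_sdiff, memA, memA₀]
    refine ⟨⟨by omega, hk, hs⟩, ?_⟩
    push_neg
    constructor
    · intro h
      have := congrArg Prod.fst h
      simp only at this
      omega
    · intro l hl1 hl2 heq
      simp only [Prod.mk.injEq] at heq
      obtain ⟨rfl, heq2⟩ := heq
      exact hne (by omega) heq2.symm
  have hB'elim : ∀ l δ, (l, δ) ∈ B \ B₀ →
      1 ≤ l ∧ l ≤ m - 1 ∧ t δ = J l ∧ (2 ≤ l → δ ≠ β (l - 1)) := by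
    intro l δ hmem
    rw [Finset.mem_sdiff, memB, memB₀] at hmem
    obtain ⟨⟨h1, h2, h3⟩, hnd⟩ := hmem
    push_neg at hnd
    obtain ⟨hnd1, hnd2⟩ := hnd
    have hlm : l ≠ m := by
      intro hl
      have hδ : t δ = t (β (m - 1)) := by rw [hl, hJm] at h3; exact h3
      rcases L2 (β (m - 1)) (β m) δ (Ne.symm hne2) htm hδ with h | h
      · exact hnd2 (m - 1) (by omega) le_rfl
          (by rw [show m - 1 + 1 = m by omega, hl, h])
      · exact hnd1 (by rw [hl, h])
    refine ⟨h1, by omega, h3, fun hl2 hδ => ?_⟩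
    refine hnd2 (l - 1) (by omega) (by omega) ?_
    rw [show l - 1 + 1 = l by omega, hδ]
  have hB'intro : ∀ l δ, 1 ≤ l → l ≤ m - 1 → t δ = J l → (2 ≤ l → δ ≠ β (l - 1)) →
      (l, δ) ∈ B \ B₀ := by
    intro l δ h1 hl ht hne
    rw [Finset.mem_sdiff, memB, memB₀]
    refine ⟨⟨h1, by omega, ht⟩, ?_⟩
    push_neg
    constructor
    · intro h
      have := congrArg Prod.fst h
      simp only at this
      omega
    · intro l' hl1 hl2 heq
      simp only [Prod.mk.injEq] at heq
      obtain ⟨hl', heq2⟩ := heq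
      exact hne (by omega) (by rw [← heq2, show l - 1 = l' by omega])

  -- master lemma for φ
  have master1 : ∀ k γ, (k, γ) ∈ A \ A₀ →
      bypassPhi R cyc β m k γ ∈ B \ B₀ ∧
      bypassPsi R cyc β m (bypassPhi R cyc β m k γ).1 (bypassPhi R cyc β m k γ).2 = (k, γ) ∧
      s (bypassPhi R cyc β m k γ).2 = t γ := by
    intro k γ hmem
    obtain ⟨hk2, hkm, hsγ, hndγ⟩ := hA'elim k γ hmem
    by_cases hkm' : k = m
    · rw [hkm'] at hsγ
      rw [hkm']
      by_cases h : R (β (m - 1)) γ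
      · have hφeq : bypassPhi R cyc β m m γ = (m - 1, cyc (β (m - 1)) γ h) := by
          unfold bypassPhi
          rw [if_pos rfl, dif_pos h]
        set δ := cyc (β (m - 1)) γ h with hδdef
        have hδR : R γ δ := hcR1 _ _ h
        have hδR2 : R δ (β (m - 1)) := hcR2 _ _ h
        have hδt : t δ = s (β (m - 1)) := hct _ _ h
        have hδs : s δ = t γ := hcs _ _ h
        refine ⟨?_, ?_, ?_⟩
        · rw [hφeq]
          refine hB'intro (m - 1) δ (by omega) le_rfl ?_ ?_
          · rw [hδt]
            exact (hJk (m - 1) (by omega)).symm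
          · intro h2l hδeq
            rw [hδeq] at hδR2
            exact hnoR' (m - 1) h2l (by omega) hδR2
        · rw [hφeq]
          by_cases hk1' : m - 1 = 1
          · have h'' : R δ (β 1) := by rw [hk1'] at hδR2; exact hδR2
            have hψeq : bypassPsi R cyc β m (m - 1) δ = (2, cyc δ (β 1) h'') := by
              unfold bypassPsi
              rw [if_pos hk1', dif_pos h'']
            rw [hψeq, Runiq_left _ _ _ (hcR2 _ _ h'') hδR, show (2 : ℕ) = m by omega]
          · have hψeq : bypassPsi R cyc β m (m - 1) δ
                = (m - 1 + 1, cyc δ (β (m - 1)) hδR2) := by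
              unfold bypassPsi
              rw [if_neg hk1', dif_pos hδR2]
            rw [hψeq, Runiq_left _ _ _ (hcR2 _ _ hδR2) hδR, show m - 1 + 1 = m by omega]
        · rw [hφeq]
          exact hδs
      · have h2 : R (β m) γ := by
          have hsγ' : s γ = t (β (m - 1)) := by rw [hsγ, hJm]
          rcases hG3 (β (m - 1)) (β m) γ (Ne.symm hne2) hsγ'.symm
            (by rw [htm]; exact hsγ'.symm) with ⟨hR, _⟩ | ⟨hR, _⟩
          · exact absurd hR h
          · exact hR
        have hφeq : bypassPhi R cyc β m m γ = (1, cyc (β m) γ h2) := by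
          unfold bypassPhi
          rw [if_pos rfl, dif_neg h, dif_pos h2]
        set δ := cyc (β m) γ h2 with hδdef
        have hδR : R γ δ := hcR1 _ _ h2
        have hδR2 : R δ (β m) := hcR2 _ _ h2
        have hδt : t δ = s (β m) := hct _ _ h2
        have hδs : s δ = t γ := hcs _ _ h2
        refine ⟨?_, ?_, ?_⟩
        · rw [hφeq]
          refine hB'intro 1 δ le_rfl (by omega) ?_ ?_
          · rw [hδt, hsm, hJ1]
          · intro h2l
            omega
        · rw [hφeq]
          have hno1 : ¬ R δ (β 1) := by
            intro hR1
            rcases hG2 δ (β 1) (β m) (Ne.symm hne1)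
              (by rw [hδt, hsm]) hδt.symm with ⟨_, hn⟩ | ⟨_, hn⟩
            · exact hn hδR2
            · exact hn hR1
          have hψeq : bypassPsi R cyc β m 1 δ = (m, cyc δ (β m) hδR2) := by
            unfold bypassPsi
            rw [if_pos rfl, dif_neg hno1, dif_pos hδR2]
          rw [hψeq, Runiq_left _ _ _ (hcR2 _ _ hδR2) hδR]
        · rw [hφeq]
          exact hδs
    · have hk1 : k ≤ m - 1 := by omega
      have h : R (β (k - 1)) γ := RKey1 k γ hk2 hk1 hsγ (hndγ hk1)
      have hφeq : bypassPhi R cyc β m k γ = (k - 1, cyc (β (k - 1)) γ h) := by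
        unfold bypassPhi
        rw [if_neg hkm', dif_pos h]
      set δ := cyc (β (k - 1)) γ h with hδdef
      have hδR : R γ δ := hcR1 _ _ h
      have hδR2 : R δ (β (k - 1)) := hcR2 _ _ h
      have hδt : t δ = s (β (k - 1)) := hct _ _ h
      have hδs : s δ = t γ := hcs _ _ h
      refine ⟨?_, ?_, ?_⟩
      · rw [hφeq]
        refine hB'intro (k - 1) δ (by omega) (by omega) ?_ ?_
        · rw [hδt]
          exact (hJk (k - 1) (by omega)).symm
        · intro h2l hδeq
          rw [hδeq] at hδR2
          exact hnoR' (k - 1) h2l (by omega) hδR2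
      · rw [hφeq]
        by_cases hk1' : k - 1 = 1
        · have h'' : R δ (β 1) := by rw [hk1'] at hδR2; exact hδR2
          have hψeq : bypassPsi R cyc β m (k - 1) δ = (2, cyc δ (β 1) h'') := by
            unfold bypassPsi
            rw [if_pos hk1', dif_pos h'']
          rw [hψeq, Runiq_left _ _ _ (hcR2 _ _ h'') hδR, show (2 : ℕ) = k by omega]
        · have hψeq : bypassPsi R cyc β m (k - 1) δ
              = (k - 1 + 1, cyc δ (β (k - 1)) hδR2) := by
            unfold bypassPsi
            rw [if_neg hk1', dif_pos hδR2]
          rw [hψeq, Runiq_left _ _ _ (hcR2 _ _ hδR2) hδR, show k - 1 + 1 = k by omega]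
      · rw [hφeq]
        exact hδs
  -- master lemma for ψ
  have master2 : ∀ l δ, (l, δ) ∈ B \ B₀ →
      bypassPsi R cyc β m l δ ∈ A \ A₀ ∧
      bypassPhi R cyc β m (bypassPsi R cyc β m l δ).1 (bypassPsi R cyc β m l δ).2 = (l, δ) ∧
      t (bypassPsi R cyc β m l δ).2 = s δ := by
    intro l δ hmem
    obtain ⟨hl1, hlm1, htδ, hndδ⟩ := hB'elim l δ hmem
    by_cases hl1' : l = 1
    · rw [hl1'] at htδ
      rw [hl1']
      by_cases h : R δ (β 1)
      · have hψeq : bypassPsi R cyc β m 1 δ = (2, cyc δ (β 1) h) := by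
          unfold bypassPsi
          rw [if_pos rfl, dif_pos h]
        set γ := cyc δ (β 1) h with hγdef
        have hγR : R (β 1) γ := hcR1 _ _ h
        have hγR2 : R γ δ := hcR2 _ _ h
        have hγs : s γ = t (β 1) := hcs _ _ h
        have hγt : t γ = s δ := hct _ _ h
        refine ⟨?_, ?_, ?_⟩
        · rw [hψeq]
          refine hA'intro 2 γ le_rfl (by omega) ?_ ?_
          · rw [hγs]
            exact P1 1 le_rfl (by omega)
          · intro h2m hγeq
            rw [hγeq] at hγR
            exact hnoR 1 le_rfl (by omega) hγR
        · rw [hψeq]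
          by_cases h2m : 2 = m
          · have h' : R (β (m - 1)) γ := by
              rw [show m - 1 = 1 by omega]
              exact hγR
            have hφeq : bypassPhi R cyc β m 2 γ = (m - 1, cyc (β (m - 1)) γ h') := by
              unfold bypassPhi
              rw [if_pos h2m, dif_pos h']
            rw [hφeq, Runiq_right _ _ _ (hcR1 _ _ h') hγR2, show m - 1 = 1 by omega]
          · have h'' : R (β (2 - 1)) γ := hγR
            have hφeq : bypassPhi R cyc β m 2 γ = (2 - 1, cyc (β (2 - 1)) γ h'') := by
              unfold bypassPhi
              rw [if_neg h2m, dif_pos h'']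
            rw [hφeq, Runiq_right _ _ _ (hcR1 _ _ h'') hγR2]
        · rw [hψeq]
          exact hγt
      · have h2 : R δ (β m) := by
          have htδ' : s (β 1) = t δ := by rw [htδ, hJ1]
          rcases hG2 δ (β 1) (β m) (Ne.symm hne1) htδ' (hsm.trans htδ') with
            ⟨hR, _⟩ | ⟨hR, _⟩
          · exact absurd hR h
          · exact hR
        have hψeq : bypassPsi R cyc β m 1 δ = (m, cyc δ (β m) h2) := by
          unfold bypassPsi
          rw [if_pos rfl, dif_neg h, dif_pos h2]
        set γ := cyc δ (β m) h2 with hγdef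
        have hγR : R (β m) γ := hcR1 _ _ h2
        have hγR2 : R γ δ := hcR2 _ _ h2
        have hγs : s γ = t (β m) := hcs _ _ h2
        have hγt : t γ = s δ := hct _ _ h2
        refine ⟨?_, ?_, ?_⟩
        · rw [hψeq]
          refine hA'intro m γ hm le_rfl ?_ ?_
          · rw [hγs, htm, hJm]
          · intro hmm1
            omega
        · rw [hψeq]
          have hnom : ¬ R (β (m - 1)) γ := by
            intro hR1
            rcases hG3 (β (m - 1)) (β m) γ (Ne.symm hne2)
              (by rw [← htm]; exact hγs.symm) hγs.symm with ⟨_, hn⟩ | ⟨_, hn⟩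
            · exact hn hγR
            · exact hn hR1
          have hφeq : bypassPhi R cyc β m m γ = (1, cyc (β m) γ hγR) := by
            unfold bypassPhi
            rw [if_pos rfl, dif_neg hnom, dif_pos hγR]
          rw [hφeq, Runiq_right _ _ _ (hcR1 _ _ hγR) hγR2]
        · rw [hψeq]
          exact hγt
    · have hl2 : 2 ≤ l := by omega
      have h : R δ (β l) := RKey2 l δ hl2 hlm1 htδ (hndδ hl2)
      have hψeq : bypassPsi R cyc β m l δ = (l + 1, cyc δ (β l) h) := by
        unfold bypassPsi
        rw [if_neg hl1', dif_pos h]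
      set γ := cyc δ (β l) h with hγdef
      have hγR : R (β l) γ := hcR1 _ _ h
      have hγR2 : R γ δ := hcR2 _ _ h
      have hγs : s γ = t (β l) := hcs _ _ h
      have hγt : t γ = s δ := hct _ _ h
      refine ⟨?_, ?_, ?_⟩
      · rw [hψeq]
        refine hA'intro (l + 1) γ (by omega) (by omega) ?_ ?_
        · rw [hγs]
          exact P1 l hl1 hlm1
        · intro hle hγeq
          rw [hγeq] at hγR
          exact hnoR l hl1 (by omega) hγR
      · rw [hψeq]
        by_cases hlm' : l + 1 = m
        · have h' : R (β (m - 1)) γ := by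
            rw [show m - 1 = l by omega]
            exact hγR
          have hφeq : bypassPhi R cyc β m (l + 1) γ = (m - 1, cyc (β (m - 1)) γ h') := by
            unfold bypassPhi
            rw [if_pos hlm', dif_pos h']
          rw [hφeq, Runiq_right _ _ _ (hcR1 _ _ h') hγR2, show m - 1 = l by omega]
        · have h'' : R (β (l + 1 - 1)) γ := by
            rw [Nat.add_sub_cancel]
            exact hγR
          have hφeq : bypassPhi R cyc β m (l + 1) γ
              = (l + 1 - 1, cyc (β (l + 1 - 1)) γ h'') := by
            unfold bypassPhi
            rw [if_neg hlm', dif_pos h'']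
          rw [hφeq, Runiq_right _ _ _ (hcR1 _ _ h'') hγR2, Nat.add_sub_cancel]
      · rw [hψeq]
        exact hγt
  -- assemble the sum computation
  have ncard_sum : ∀ P : E → Prop, (({a : E | P a}.ncard : ℤ)) = ∑ a : E, if P a then (1:ℤ) else 0 := by
    intro P
    rw [Set.ncard_eq_toFinset_card', Set.toFinset_setOf, Finset.card_filter]
    push_cast
    rfl
  funext i
  rw [Finset.sum_apply]
  have hRHS : ((2 • (Pi.single (t (β (m - 1))) (1 : ℤ) - Pi.single (s (β 1)) 1) : V → ℤ)) i
      = 2 * ((if i = t (β (m - 1)) then (1:ℤ) else 0) - (if i = s (β 1) then (1:ℤ) else 0)) := by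
    simp [Pi.single_apply]
  rw [hRHS]
  have step : ∀ k,
      (({a : E | s a = (if k = m then t (β (m - 1)) else s (β k)) ∧ t a = i}.ncard : ℤ) -
       ({a : E | s a = i ∧ t a = (if k = m then t (β (m - 1)) else s (β k))}.ncard : ℤ))
      = (∑ a : E, if s a = J k ∧ t a = i then (1:ℤ) else 0)
        - (∑ a : E, if s a = i ∧ t a = J k then (1:ℤ) else 0) := by
    intro k
    rw [ncard_sum, ncard_sum]
    simp only [hJ]
  rw [Finset.sum_congr rfl (fun k _ => step k), Finset.sum_sub_distrib]
  have e2 : ∑ k ∈ Finset.Icc 1 m, ∑ a : E, (if s a = J k ∧ t a = i then (1:ℤ) else 0)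
      = ∑ p ∈ A, (if t p.2 = i then (1:ℤ) else 0) := by
    rw [hAdef, Finset.sum_filter, Finset.sum_product]
    refine Finset.sum_congr rfl fun k _ => Finset.sum_congr rfl fun a _ => ?_
    rw [ite_and]
  have e3 : ∑ k ∈ Finset.Icc 1 m, ∑ a : E, (if s a = i ∧ t a = J k then (1:ℤ) else 0)
      = ∑ p ∈ B, (if s p.2 = i then (1:ℤ) else 0) := by
    rw [hBdef, Finset.sum_filter, Finset.sum_product]
    refine Finset.sum_congr rfl fun k _ => Finset.sum_congr rfl fun a _ => ?_
    by_cases h1 : s a = i <;> by_cases h2 : t a = J k <;> simp [h1, h2]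
  rw [e2, e3]
  have hA0sub : A₀ ⊆ A := by
    intro p hp
    rw [memA₀] at hp
    rcases hp with rfl | ⟨l, hl1, hl2, rfl⟩
    · exact (memA 1 (β m)).2 ⟨le_rfl, by omega, by rw [hsm, hJ1]⟩
    · exact (memA l (β l)).2 ⟨hl1, by omega, (hJk l (by omega)).symm⟩
  have hB0sub : B₀ ⊆ B := by
    intro p hp
    rw [memB₀] at hp
    rcases hp with rfl | ⟨l, hl1, hl2, rfl⟩
    · exact (memB m (β m)).2 ⟨by omega, le_rfl, by rw [htm, hJm]⟩
    · exact (memB (l + 1) (β l)).2 ⟨by omega, by omega, P1 l hl1 hl2⟩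
  rw [← Finset.sum_sdiff hA0sub, ← Finset.sum_sdiff hB0sub]
  have core : ∑ p ∈ A \ A₀, (if t p.2 = i then (1:ℤ) else 0)
      = ∑ p ∈ B \ B₀, (if s p.2 = i then (1:ℤ) else 0) := by
    refine Finset.sum_nbij' (fun p => bypassPhi R cyc β m p.1 p.2)
      (fun p => bypassPsi R cyc β m p.1 p.2) ?_ ?_ ?_ ?_ ?_
    · intro p hp
      exact (master1 p.1 p.2 hp).1
    · intro p hp
      exact (master2 p.1 p.2 hp).1
    · intro p hp
      exact (master1 p.1 p.2 hp).2.1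
    · intro p hp
      exact (master2 p.1 p.2 hp).2.1
    · intro p hp
      rw [(master1 p.1 p.2 hp).2.2]
  rw [core]
  have hnotmemA : (1, β m) ∉ (Finset.Icc 1 (m - 1)).image (fun l => (l, β l)) := by
    simp only [Finset.mem_image, Finset.mem_Icc, Prod.mk.injEq, not_exists]
    rintro l ⟨-, rfl, h⟩
    exact hne1 h.symm
  have hnotmemB : (m, β m) ∉ (Finset.Icc 1 (m - 1)).image (fun l => (l + 1, β l)) := by
    simp only [Finset.mem_image, Finset.mem_Icc, Prod.mk.injEq, not_exists]
    rintro l ⟨hl, hl2, h⟩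
    rw [show l = m - 1 by omega] at h
    exact hne2 h.symm
  have hsumA₀ : ∑ p ∈ A₀, (if t p.2 = i then (1:ℤ) else 0)
      = (if t (β m) = i then (1:ℤ) else 0)
        + ∑ l ∈ Finset.Icc 1 (m - 1), (if t (β l) = i then (1:ℤ) else 0) := by
    rw [hA₀def, Finset.sum_insert hnotmemA,
      Finset.sum_image (fun x _ y _ hxy => by simpa using congrArg Prod.fst hxy)]
  have hsumB₀ : ∑ p ∈ B₀, (if s p.2 = i then (1:ℤ) else 0)
      = (if s (β m) = i then (1:ℤ) else 0)
        + ∑ l ∈ Finset.Icc 1 (m - 1), (if s (β l) = i then (1:ℤ) else 0) := by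
    rw [hB₀def, Finset.sum_insert hnotmemB,
      Finset.sum_image (fun x _ y _ hxy => by
        have := congrArg Prod.fst hxy
        simp only at this
        omega)]
  rw [hsumA₀, hsumB₀]
  have hAl : ∀ l ∈ Finset.Icc 1 (m - 1),
      (if t (β l) = i then (1:ℤ) else 0) = (if J (l + 1) = i then (1:ℤ) else 0) := by
    intro l hl
    rw [Finset.mem_Icc] at hl
    rw [P1 l hl.1 hl.2]
  have hBl : ∀ l ∈ Finset.Icc 1 (m - 1),
      (if s (β l) = i then (1:ℤ) else 0) = (if J l = i then (1:ℤ) else 0) := by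
    intro l hl
    rw [Finset.mem_Icc] at hl
    rw [← hJk l (by omega)]
  rw [Finset.sum_congr rfl hAl, Finset.sum_congr rfl hBl]
  have tele : ∀ n : ℕ, ∑ l ∈ Finset.Icc 1 n,
      ((if J (l + 1) = i then (1:ℤ) else 0) - (if J l = i then (1:ℤ) else 0))
      = (if J (n + 1) = i then (1:ℤ) else 0) - (if J 1 = i then (1:ℤ) else 0) := by
    intro n
    induction n with
    | zero => simp
    | succ n ih =>
      rw [Finset.sum_Icc_succ_top (by omega), ih]
      ring
  have htele := tele (m - 1)
  rw [show m - 1 + 1 = m by omega, Finset.sum_sub_distrib] at htele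
  have h1 : (if t (β m) = i then (1:ℤ) else 0) = (if J m = i then (1:ℤ) else 0) := by
    rw [htm, ← hJm]
  have h2 : (if s (β m) = i then (1:ℤ) else 0) = (if J 1 = i then (1:ℤ) else 0) := by
    rw [hsm, ← hJ1]
  have h3 : (if i = t (β (m - 1)) then (1:ℤ) else 0) = (if J m = i then (1:ℤ) else 0) := by
    rw [← hJm]
    exact if_congr eq_comm rfl rfl
  have h4 : (if i = s (β 1) then (1:ℤ) else 0) = (if J 1 = i then (1:ℤ) else 0) := by
    rw [← hJ1]
    exact if_congr eq_comm rfl rfl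
  rw [h1, h2, h3, h4]
  linarith [htele]
end

section
/- Let Q be a finite loop-free quiver with a gentle system of relations R that is cyclically closed. Let β₁,…,β_{m−1} (with m ≥ 2) be arrows forming a path, i.e., t(β_i) = s(β_{i+1}) for 1 ≤ i ≤ m−2, with (β_i, β_{i+1}) ∉ R for 1 ≤ i ≤ m−2, and let β_m, β_{m+1} be arrows, both not in {β₁, β_{m−1}}, with t(β_m) = s(β_{m+1}), (β_m, β_{m+1}) ∉ R, s(β_m) = s(β₁), t(β_{m+1}) = t(β_{m−1}), and such that the only arrows of Q whose source or target is the vertex t(β_m) = s(β_{m+1}) are β_m and β_{m+1} (so β₁,…,β_{m−1} together with β_m, β_{m+1} form an almost bypass). Set j_k := s(β_k) for 1 ≤ k ≤ m−1 and j_m := t(β_{m−1}), and let b_j denote the j-th column of the signed adjacency matrix B of Q and e_j ∈ ℤ^{Q₀} the j-th standard basis vector. Then Σ_{k=1}^{m} b_{j_k} = e_{j_m} − e_{j_1} in ℤ^{Q₀}. -/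
lemma aux_three' {α : Type*} {S : Set α} (hfin : S.Finite) (h2 : S.ncard ≤ 2) {x y z : α}
    (hx : x ∈ S) (hy : y ∈ S) (hz : z ∈ S) (hxy : x ≠ y) : z = x ∨ z = y := by
  by_contra h
  push_neg at h
  have hsub : ({z, x, y} : Set α) ⊆ S := by
    intro u hu
    simp only [Set.mem_insert_iff, Set.mem_singleton_iff] at hu
    rcases hu with rfl | rfl | rfl <;> assumption
  have hxyfin : ({x, y} : Set α).Finite := (Set.finite_singleton y).insert x
  have h3 : ({z, x, y} : Set α).ncard = 3 := by
    rw [Set.ncard_insert_of_notMem (by simp [h.1, h.2]) hxyfin, Set.ncard_pair hxy]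
  have := Set.ncard_le_ncard hsub hfin
  omega

lemma aux_card_eq' {α β' : Type*} {S : Set α} {T : Set β'}
    (hS : ∀ x ∈ S, ∀ y ∈ S, x = y) (hT : ∀ x ∈ T, ∀ y ∈ T, x = y)
    (h : S.Nonempty ↔ T.Nonempty) : S.ncard = T.ncard := by
  rcases Set.eq_empty_or_nonempty S with rfl | ⟨x, hx⟩
  · have hT' : T = ∅ := by
      rw [← Set.not_nonempty_iff_eq_empty, ← h]
      simp
    simp [hT']
  · obtain ⟨y, hy⟩ := h.mp ⟨x, hx⟩
    have hS' : S = {x} := Set.eq_singleton_iff_unique_mem.mpr ⟨hx, fun z hz => hS z hz x hx⟩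
    have hT' : T = {y} := Set.eq_singleton_iff_unique_mem.mpr ⟨hy, fun z hz => hT z hz y hy⟩
    simp [hS', hT']

lemma aux_split' {α : Type*} (S : Set α) (hfin : S.Finite) (x : α)
    [Decidable (x ∈ S)] : S.ncard = (S \ {x}).ncard + (if x ∈ S then 1 else 0) := by
  by_cases hx : x ∈ S
  · rw [if_pos hx]
    exact (Set.ncard_diff_singleton_add_one hx hfin).symm
  · rw [if_neg hx]
    simp [Set.diff_singleton_eq_self hx]

theorem aux_bypass
    (V E : Type*) [DecidableEq V] [Fintype E]
    (s t : E → V)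
    (hloop : ∀ a : E, s a ≠ t a)
    (R : E → E → Prop)
    (hG1s : ∀ v : V, {a : E | s a = v}.ncard ≤ 2)
    (hG1t : ∀ v : V, {a : E | t a = v}.ncard ≤ 2)
    (hG2 : ∀ α β₁ β₂ : E, β₁ ≠ β₂ → s β₁ = t α → s β₂ = t α → Xor' (R α β₁) (R α β₂))
    (hG3 : ∀ α₁ α₂ β : E, α₁ ≠ α₂ → t α₁ = s β → t α₂ = s β → Xor' (R α₁ β) (R α₂ β))
    (hcyc : ∀ α β : E, R α β → ∃ γ : E, s γ = t β ∧ t γ = s α ∧ R β γ ∧ R γ α)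
    (m : ℕ) (hm : 2 ≤ m) (β : ℕ → E) (j : ℕ → V)
    (hj1 : ∀ k, k ≠ m → j k = s (β k)) (hj2 : j m = t (β (m - 1)))
    (hpath : ∀ i, 1 ≤ i → i ≤ m - 2 → t (β i) = s (β (i + 1)))
    (hnoR : ∀ i, 1 ≤ i → i ≤ m - 2 → ¬ R (β i) (β (i + 1)))
    (hne1 : β m ≠ β 1) (hne2 : β m ≠ β (m - 1))
    (hne3 : β (m + 1) ≠ β 1) (hne4 : β (m + 1) ≠ β (m - 1))
    (hcomp : t (β m) = s (β (m + 1)))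
    (hnoR2 : ¬ R (β m) (β (m + 1)))
    (hsm : s (β m) = s (β 1)) (htm : t (β (m + 1)) = t (β (m - 1)))
    (honly : ∀ a : E, s a = t (β m) ∨ t a = t (β m) → a = β m ∨ a = β (m + 1)) :
    ∀ i : V, (∑ k ∈ Finset.Icc 1 m,
        ((({a : E | s a = j k ∧ t a = i}.ncard : ℤ)) -
         ({a : E | s a = i ∧ t a = j k}.ncard : ℤ)))
      = (if i = j m then 1 else 0) - (if i = j 1 then 1 else 0) := by
  classical
  have hfin : ∀ S : Set E, S.Finite := fun S => Set.toFinite S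
  have hβ1m : β 1 ≠ β m := fun h => hne1 h.symm
  have hβ1m1 : β 1 ≠ β (m + 1) := fun h => hne3 h.symm
  have hβm1m1 : β (m - 1) ≠ β (m + 1) := fun h => hne4 h.symm
  have hjeq : ∀ k, 1 ≤ k → k ≤ m - 1 → j k = s (β k) := fun k h1 h2 => hj1 k (by omega)
  have hjs : ∀ k, 1 ≤ k → k ≤ m - 1 → t (β k) = j (k + 1) := by
    intro k h1 h2
    by_cases h : k + 1 = m
    · rw [h, hj2]
      have hk : k = m - 1 := by omega
      rw [hk]
    · rw [hj1 _ h]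
      exact hpath k h1 (by omega)
  have hsβm : s (β m) = j 1 := by rw [hjeq 1 le_rfl (by omega)]; exact hsm
  have htβm1 : t (β (m + 1)) = j m := by rw [hj2]; exact htm
  have hw1 : s (β 1) ≠ t (β m) := by
    intro h
    rcases honly (β 1) (Or.inl h) with h' | h'
    · exact hβ1m h'
    · exact hβ1m1 h'
  have hwm : t (β (m - 1)) ≠ t (β m) := by
    intro h
    rcases honly (β (m - 1)) (Or.inr h) with h' | h'
    · exact hne2 h'.symm
    · exact hne4 h'.symm
  have F3 : ∀ γ, ¬ R γ (β m) := by
    intro γ hr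
    obtain ⟨γ', hs', ht', h1', h2'⟩ := hcyc γ (β m) hr
    rcases honly γ' (Or.inl hs') with rfl | rfl
    · exact hw1 (by rw [← hsm]; exact hs')
    · exact hnoR2 h1'
  have F4 : ∀ δ, ¬ R (β (m + 1)) δ := by
    intro δ hr
    obtain ⟨γ', hs', ht', h1', h2'⟩ := hcyc (β (m + 1)) δ hr
    have htw : t γ' = t (β m) := by rw [ht', ← hcomp]
    rcases honly γ' (Or.inr htw) with rfl | rfl
    · exact hnoR2 h2'
    · exact hwm (by rw [← htm]; exact htw)
  have Gout1 : ∀ a, s a = j 1 → a = β 1 ∨ a = β m :=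
    fun a ha => aux_three' (hfin _) (hG1s (j 1))
      ((hjeq 1 le_rfl (by omega)).symm : s (β 1) = j 1) hsβm ha hβ1m
  have Ginm : ∀ a, t a = j m → a = β (m - 1) ∨ a = β (m + 1) :=
    fun a ha => aux_three' (hfin _) (hG1t (j m)) (hj2.symm : t (β (m - 1)) = j m) htβm1 ha hβm1m1
  have GinR : ∀ k, 1 ≤ k → k ≤ m - 1 → ∀ γ, t γ = j k → (2 ≤ k → γ ≠ β (k - 1)) → R γ (β k) := by
    intro k h1 h2 γ hγ hx
    by_cases hk : k = 1
    · subst hk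
      have hxor := hG2 γ (β 1) (β m) hβ1m
        ((hjeq 1 le_rfl (by omega)).symm.trans hγ.symm) (hsβm.trans hγ.symm)
      rcases hxor with ⟨h, _⟩ | ⟨h, _⟩
      · exact h
      · exact absurd h (F3 γ)
    · have hk2 : 2 ≤ k := by omega
      have hp : t (β (k - 1)) = s (β k) := by
        have := hpath (k - 1) (by omega) (by omega)
        rwa [show k - 1 + 1 = k from by omega] at this
      have hxor := hG3 γ (β (k - 1)) (β k) (hx hk2)
        (hγ.trans (hjeq k h1 h2)) hp
      rcases hxor with ⟨h, _⟩ | ⟨h, _⟩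
      · exact h
      · exact absurd h (by
          have := hnoR (k - 1) (by omega) (by omega)
          rwa [show k - 1 + 1 = k from by omega] at this)
  have GoutR : ∀ k, 2 ≤ k → k ≤ m → ∀ δ, s δ = j k → (k ≤ m - 1 → δ ≠ β k) → R (β (k - 1)) δ := by
    intro k h2 hkm δ hδ hx
    by_cases hk : k = m
    · rw [hk] at hδ
      rw [show k - 1 = m - 1 from by omega]
      have hxor := hG3 (β (m - 1)) (β (m + 1)) δ hβm1m1
        (hj2.symm.trans hδ.symm) (htβm1.trans hδ.symm)
      rcases hxor with ⟨h, _⟩ | ⟨h, _⟩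
      · exact h
      · exact absurd h (F4 δ)
    · have hkm1 : k ≤ m - 1 := by omega
      have hp : t (β (k - 1)) = s (β k) := by
        have := hpath (k - 1) (by omega) (by omega)
        rwa [show k - 1 + 1 = k from by omega] at this
      have hxor := hG2 (β (k - 1)) (β k) δ (fun h => hx hkm1 h.symm) hp.symm
        (hδ.trans ((hjeq k (by omega) hkm1).trans hp.symm))
      rcases hxor with ⟨h, _⟩ | ⟨h, _⟩
      · exact absurd h (by
          have := hnoR (k - 1) (by omega) (by omega)
          rwa [show k - 1 + 1 = k from by omega] at this)
      · exact h
  have Uin : ∀ k, 1 ≤ k → k ≤ m - 1 → ∀ γ γ',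
      (t γ = j k ∧ (2 ≤ k → γ ≠ β (k - 1))) → (t γ' = j k ∧ (2 ≤ k → γ' ≠ β (k - 1))) →
      γ = γ' := by
    intro k h1 h2 γ γ' hγ hγ'
    by_contra hne'
    have r1 := GinR k h1 h2 γ hγ.1 hγ.2
    have r2 := GinR k h1 h2 γ' hγ'.1 hγ'.2
    rcases hG3 γ γ' (β k) hne' (hγ.1.trans (hjeq k h1 h2)) (hγ'.1.trans (hjeq k h1 h2)) with
      ⟨_, h⟩ | ⟨_, h⟩
    · exact h r2
    · exact h r1
  have Uout : ∀ k, 2 ≤ k → k ≤ m → ∀ δ δ',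
      (s δ = j k ∧ (k ≤ m - 1 → δ ≠ β k)) → (s δ' = j k ∧ (k ≤ m - 1 → δ' ≠ β k)) →
      δ = δ' := by
    intro k h2 hkm δ δ' hδ hδ'
    by_contra hne'
    have r1 := GoutR k h2 hkm δ hδ.1 hδ.2
    have r2 := GoutR k h2 hkm δ' hδ'.1 hδ'.2
    have htj : t (β (k - 1)) = j k := by
      have := hjs (k - 1) (by omega) (by omega)
      rwa [show k - 1 + 1 = k from by omega] at this
    rcases hG2 (β (k - 1)) δ δ' hne' (hδ.1.trans htj.symm) (hδ'.1.trans htj.symm) with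
      ⟨_, h⟩ | ⟨_, h⟩
    · exact h r2
    · exact h r1
  have Pair1 : ∀ k, 1 ≤ k → k ≤ m - 1 → ∀ γ, t γ = j k → (2 ≤ k → γ ≠ β (k - 1)) →
      ∃ δ, (s δ = j (k + 1) ∧ (k + 1 ≤ m - 1 → δ ≠ β (k + 1))) ∧ t δ = s γ := by
    intro k h1 h2 γ hγ hx
    obtain ⟨δ, hsδ, htδ, r1, r2⟩ := hcyc γ (β k) (GinR k h1 h2 γ hγ hx)
    refine ⟨δ, ⟨hsδ.trans (hjs k h1 h2), ?_⟩, htδ⟩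
    intro hk1 hδ
    rw [hδ] at r1
    exact hnoR k (by omega) (by omega) r1
  have Pair2 : ∀ k, 1 ≤ k → k ≤ m - 1 → ∀ δ, s δ = j (k + 1) → (k + 1 ≤ m - 1 → δ ≠ β (k + 1)) →
      ∃ γ, (t γ = j k ∧ (2 ≤ k → γ ≠ β (k - 1))) ∧ s γ = t δ := by
    intro k h1 h2 δ hδ hx
    have r : R (β k) δ := by
      have := GoutR (k + 1) (by omega) (by omega) δ hδ hx
      rwa [show k + 1 - 1 = k from by omega] at this
    obtain ⟨γ, hsγ, htγ, r1, r2⟩ := hcyc (β k) δ r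
    refine ⟨γ, ⟨htγ.trans (hjeq k h1 h2).symm, ?_⟩, hsγ⟩
    intro hk2 hγ'
    rw [hγ'] at r2
    have := hnoR (k - 1) (by omega) (by omega)
    rw [show k - 1 + 1 = k from by omega] at this
    exact this r2
  
  -- counting part
  intro i
  have hO1 : {a : E | s a = j 1 ∧ t a = i}.ncard
      = (if t (β 1) = i then 1 else 0) + (if t (β m) = i then 1 else 0) := by
    have hset : {a : E | s a = j 1 ∧ t a = i} = {a : E | (a = β 1 ∨ a = β m) ∧ t a = i} := by
      ext a
      simp only [Set.mem_setOf_eq]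
      constructor
      · rintro ⟨h1, h2⟩
        exact ⟨Gout1 a h1, h2⟩
      · rintro ⟨h1, h2⟩
        refine ⟨?_, h2⟩
        rcases h1 with rfl | rfl
        · exact (hjeq 1 le_rfl (by omega)).symm
        · exact hsβm
    rw [hset]
    by_cases h1 : t (β 1) = i <;> by_cases h2 : t (β m) = i
    · rw [if_pos h1, if_pos h2]
      have he : {a : E | (a = β 1 ∨ a = β m) ∧ t a = i} = {β 1, β m} := by
        ext a
        simp only [Set.mem_setOf_eq, Set.mem_insert_iff, Set.mem_singleton_iff]
        constructor
        · exact fun h => h.1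
        · rintro (rfl | rfl)
          · exact ⟨Or.inl rfl, h1⟩
          · exact ⟨Or.inr rfl, h2⟩
      rw [he, Set.ncard_pair hβ1m]
    · rw [if_pos h1, if_neg h2]
      have he : {a : E | (a = β 1 ∨ a = β m) ∧ t a = i} = {β 1} := by
        ext a
        simp only [Set.mem_setOf_eq, Set.mem_singleton_iff]
        constructor
        · rintro ⟨rfl | rfl, hh⟩
          · rfl
          · exact absurd hh h2
        · rintro rfl
          exact ⟨Or.inl rfl, h1⟩
      rw [he, Set.ncard_singleton]
    · rw [if_neg h1, if_pos h2]
      have he : {a : E | (a = β 1 ∨ a = β m) ∧ t a = i} = {β m} := by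
        ext a
        simp only [Set.mem_setOf_eq, Set.mem_singleton_iff]
        constructor
        · rintro ⟨rfl | rfl, hh⟩
          · exact absurd hh h1
          · rfl
        · rintro rfl
          exact ⟨Or.inr rfl, h2⟩
      rw [he, Set.ncard_singleton]
    · rw [if_neg h1, if_neg h2]
      have he : {a : E | (a = β 1 ∨ a = β m) ∧ t a = i} = ∅ := by
        ext a
        simp only [Set.mem_setOf_eq, Set.mem_empty_iff_false, iff_false]
        rintro ⟨rfl | rfl, hh⟩
        · exact h1 hh
        · exact h2 hh
      rw [he, Set.ncard_empty]
  have hIm : {a : E | s a = i ∧ t a = j m}.ncard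
      = (if s (β (m - 1)) = i then 1 else 0) + (if s (β (m + 1)) = i then 1 else 0) := by
    have hset : {a : E | s a = i ∧ t a = j m}
        = {a : E | (a = β (m - 1) ∨ a = β (m + 1)) ∧ s a = i} := by
      ext a
      simp only [Set.mem_setOf_eq]
      constructor
      · rintro ⟨h1, h2⟩
        exact ⟨Ginm a h2, h1⟩
      · rintro ⟨h1, h2⟩
        refine ⟨h2, ?_⟩
        rcases h1 with rfl | rfl
        · exact hj2.symm
        · exact htβm1
    rw [hset]
    by_cases h1 : s (β (m - 1)) = i <;> by_cases h2 : s (β (m + 1)) = i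
    · rw [if_pos h1, if_pos h2]
      have he : {a : E | (a = β (m - 1) ∨ a = β (m + 1)) ∧ s a = i} = {β (m - 1), β (m + 1)} := by
        ext a
        simp only [Set.mem_setOf_eq, Set.mem_insert_iff, Set.mem_singleton_iff]
        constructor
        · exact fun h => h.1
        · rintro (rfl | rfl)
          · exact ⟨Or.inl rfl, h1⟩
          · exact ⟨Or.inr rfl, h2⟩
      rw [he, Set.ncard_pair hβm1m1]
    · rw [if_pos h1, if_neg h2]
      have he : {a : E | (a = β (m - 1) ∨ a = β (m + 1)) ∧ s a = i} = {β (m - 1)} := by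
        ext a
        simp only [Set.mem_setOf_eq, Set.mem_singleton_iff]
        constructor
        · rintro ⟨rfl | rfl, hh⟩
          · rfl
          · exact absurd hh h2
        · rintro rfl
          exact ⟨Or.inl rfl, h1⟩
      rw [he, Set.ncard_singleton]
    · rw [if_neg h1, if_pos h2]
      have he : {a : E | (a = β (m - 1) ∨ a = β (m + 1)) ∧ s a = i} = {β (m + 1)} := by
        ext a
        simp only [Set.mem_setOf_eq, Set.mem_singleton_iff]
        constructor
        · rintro ⟨rfl | rfl, hh⟩
          · exact absurd hh h1
          · rfl
        · rintro rfl
          exact ⟨Or.inr rfl, h2⟩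
      rw [he, Set.ncard_singleton]
    · rw [if_neg h1, if_neg h2]
      have he : {a : E | (a = β (m - 1) ∨ a = β (m + 1)) ∧ s a = i} = ∅ := by
        ext a
        simp only [Set.mem_setOf_eq, Set.mem_empty_iff_false, iff_false]
        rintro ⟨rfl | rfl, hh⟩
        · exact h1 hh
        · exact h2 hh
      rw [he, Set.ncard_empty]
  have hOmid : ∀ k, 2 ≤ k → k ≤ m - 1 → {a : E | s a = j k ∧ t a = i}.ncard
      = {a : E | (s a = j k ∧ (k ≤ m - 1 → a ≠ β k)) ∧ t a = i}.ncard
        + (if t (β k) = i then 1 else 0) := by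
    intro k h2 h3
    rw [aux_split' {a : E | s a = j k ∧ t a = i} (hfin _) (β k)]
    congr 1
    · congr 1
      ext a
      simp only [Set.mem_diff, Set.mem_setOf_eq, Set.mem_singleton_iff]
      constructor
      · rintro ⟨⟨ha, hb⟩, hc⟩
        exact ⟨⟨ha, fun _ => hc⟩, hb⟩
      · rintro ⟨⟨ha, hb⟩, hc⟩
        exact ⟨⟨ha, hc⟩, hb h3⟩
    · have hmem : β k ∈ {a : E | s a = j k ∧ t a = i} ↔ t (β k) = i := by
        simp only [Set.mem_setOf_eq]
        constructor
        · exact fun h => h.2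
        · exact fun h => ⟨(hjeq k (by omega) h3).symm, h⟩
      simp only [hmem]
  have hOm : {a : E | s a = j m ∧ t a = i}.ncard
      = {a : E | (s a = j m ∧ (m ≤ m - 1 → a ≠ β m)) ∧ t a = i}.ncard := by
    congr 1
    ext a
    simp only [Set.mem_setOf_eq]
    constructor
    · rintro ⟨ha, hb⟩
      exact ⟨⟨ha, fun h => absurd h (by omega)⟩, hb⟩
    · rintro ⟨⟨ha, _⟩, hb⟩
      exact ⟨ha, hb⟩
  have hImid : ∀ k, 2 ≤ k → k ≤ m - 1 → {a : E | s a = i ∧ t a = j k}.ncard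
      = {a : E | (t a = j k ∧ (2 ≤ k → a ≠ β (k - 1))) ∧ s a = i}.ncard
        + (if s (β (k - 1)) = i then 1 else 0) := by
    intro k h2 h3
    have htk : t (β (k - 1)) = j k := by
      have := hjs (k - 1) (by omega) (by omega)
      rwa [show k - 1 + 1 = k from by omega] at this
    rw [aux_split' {a : E | s a = i ∧ t a = j k} (hfin _) (β (k - 1))]
    congr 1
    · congr 1
      ext a
      simp only [Set.mem_diff, Set.mem_setOf_eq, Set.mem_singleton_iff]
      constructor
      · rintro ⟨⟨ha, hb⟩, hc⟩
        exact ⟨⟨hb, fun _ => hc⟩, ha⟩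
      · rintro ⟨⟨ha, hb⟩, hc⟩
        exact ⟨⟨hc, ha⟩, hb h2⟩
    · have hmem : β (k - 1) ∈ {a : E | s a = i ∧ t a = j k} ↔ s (β (k - 1)) = i := by
        simp only [Set.mem_setOf_eq]
        constructor
        · exact fun h => h.1
        · exact fun h => ⟨h, htk⟩
      simp only [hmem]
  have hI1 : {a : E | s a = i ∧ t a = j 1}.ncard
      = {a : E | (t a = j 1 ∧ (2 ≤ 1 → a ≠ β 0)) ∧ s a = i}.ncard := by
    congr 1
    ext a
    simp only [Set.mem_setOf_eq]
    constructor
    · rintro ⟨ha, hb⟩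
      exact ⟨⟨hb, fun h => absurd h (by omega)⟩, ha⟩
    · rintro ⟨⟨ha, _⟩, hb⟩
      exact ⟨hb, ha⟩
  have hpairc : ∀ k, 1 ≤ k → k ≤ m - 1 →
      {a : E | (t a = j k ∧ (2 ≤ k → a ≠ β (k - 1))) ∧ s a = i}.ncard
      = {a : E | (s a = j (k + 1) ∧ (k + 1 ≤ m - 1 → a ≠ β (k + 1))) ∧ t a = i}.ncard := by
    intro k h1 h2
    apply aux_card_eq'
    · intro x hx y hy
      simp only [Set.mem_setOf_eq] at hx hy
      exact Uin k h1 h2 x y hx.1 hy.1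
    · intro x hx y hy
      simp only [Set.mem_setOf_eq] at hx hy
      exact Uout (k + 1) (by omega) (by omega) x y hx.1 hy.1
    · constructor
      · rintro ⟨γ, hγ⟩
        simp only [Set.mem_setOf_eq] at hγ
        obtain ⟨δ, hδ, hδt⟩ := Pair1 k h1 h2 γ hγ.1.1 hγ.1.2
        exact ⟨δ, ⟨hδ, hδt.trans hγ.2⟩⟩
      · rintro ⟨δ, hδ⟩
        simp only [Set.mem_setOf_eq] at hδ
        obtain ⟨γ, hγ, hγs⟩ := Pair2 k h1 h2 δ hδ.1.1 hδ.1.2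
        exact ⟨γ, ⟨hγ, hγs.trans hδ.2⟩⟩
  -- assembly
  have h1m : (1 : ℕ) ≤ m - 1 := by omega
  have hIccm : Finset.Icc 1 m = insert 1 (insert m (Finset.Icc 2 (m - 1))) := by
    ext x
    simp only [Finset.mem_Icc, Finset.mem_insert]
    omega
  have h1notin : (1 : ℕ) ∉ insert m (Finset.Icc 2 (m - 1)) := by
    simp only [Finset.mem_insert, Finset.mem_Icc]
    omega
  have hmnotin : m ∉ Finset.Icc 2 (m - 1) := by
    simp only [Finset.mem_Icc]
    omega
  have hIcc1m1 : Finset.Icc 1 (m - 1) = insert 1 (Finset.Icc 2 (m - 1)) := by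
    ext x
    simp only [Finset.mem_Icc, Finset.mem_insert]
    omega
  have h1notin2 : (1 : ℕ) ∉ Finset.Icc 2 (m - 1) := by
    simp only [Finset.mem_Icc]
    omega
  have hIcc2m : Finset.Icc 2 m = insert m (Finset.Icc 2 (m - 1)) := by
    ext x
    simp only [Finset.mem_Icc, Finset.mem_insert]
    omega
  have shift : ∀ f : ℕ → ℤ,
      (∑ k ∈ Finset.Icc 2 m, f k) = ∑ k ∈ Finset.Icc 1 (m - 1), f (k + 1) := by
    intro f
    refine Finset.sum_nbij' (fun k => k - 1) (fun k => k + 1) ?_ ?_ ?_ ?_ ?_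
    · intro a ha
      simp only [Finset.mem_Icc] at ha ⊢
      omega
    · intro a ha
      simp only [Finset.mem_Icc] at ha ⊢
      omega
    · intro a ha
      simp only [Finset.mem_Icc] at ha
      show a - 1 + 1 = a
      omega
    · intro a ha
      simp only [Finset.mem_Icc] at ha
      show a + 1 - 1 = a
      omega
    · intro a ha
      simp only [Finset.mem_Icc] at ha
      rw [show a - 1 + 1 = a from by omega]
  -- abbreviations (as integer values)
  set xO : ℕ → ℤ :=
    fun k => ({a : E | (s a = j k ∧ (k ≤ m - 1 → a ≠ β k)) ∧ t a = i}.ncard : ℤ) with hxO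
  set xI : ℕ → ℤ :=
    fun k => ({a : E | (t a = j k ∧ (2 ≤ k → a ≠ β (k - 1))) ∧ s a = i}.ncard : ℤ) with hxI
  have hxpair : ∀ k, 1 ≤ k → k ≤ m - 1 → xI k = xO (k + 1) := by
    intro k h1 h2
    simp only [hxO, hxI]
    exact_mod_cast congrArg (Nat.cast : ℕ → ℤ) (hpairc k h1 h2)
  -- the x-sum vanishes
  have hxsum : (xO m + ∑ k ∈ Finset.Icc 2 (m - 1), xO k)
      - (xI 1 + ∑ k ∈ Finset.Icc 2 (m - 1), xI k) = 0 := by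
    have e1 : xO m + ∑ k ∈ Finset.Icc 2 (m - 1), xO k = ∑ k ∈ Finset.Icc 2 m, xO k := by
      rw [hIcc2m, Finset.sum_insert hmnotin]
    have e2 : xI 1 + ∑ k ∈ Finset.Icc 2 (m - 1), xI k = ∑ k ∈ Finset.Icc 1 (m - 1), xI k := by
      rw [hIcc1m1, Finset.sum_insert h1notin2]
    rw [e1, e2, shift xO]
    rw [← Finset.sum_sub_distrib]
    apply Finset.sum_eq_zero
    intro k hk
    simp only [Finset.mem_Icc] at hk
    rw [← hxpair k hk.1 hk.2]
    ring
  -- the telescoping part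
  have htel : ((if t (β 1) = i then (1 : ℤ) else 0)
        + ∑ k ∈ Finset.Icc 2 (m - 1), (if t (β k) = i then (1 : ℤ) else 0))
      - ((if s (β (m - 1)) = i then (1 : ℤ) else 0)
        + ∑ k ∈ Finset.Icc 2 (m - 1), (if s (β (k - 1)) = i then (1 : ℤ) else 0))
      = (if i = j m then 1 else 0) - (if i = j 1 then 1 else 0) := by
    have e1 : (if t (β 1) = i then (1 : ℤ) else 0)
        + ∑ k ∈ Finset.Icc 2 (m - 1), (if t (β k) = i then (1 : ℤ) else 0)
        = ∑ k ∈ Finset.Icc 1 (m - 1), (if t (β k) = i then (1 : ℤ) else 0) := by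
      rw [hIcc1m1, Finset.sum_insert h1notin2]
    have e2 : (if s (β (m - 1)) = i then (1 : ℤ) else 0)
        + ∑ k ∈ Finset.Icc 2 (m - 1), (if s (β (k - 1)) = i then (1 : ℤ) else 0)
        = ∑ k ∈ Finset.Icc 1 (m - 1), (if s (β k) = i then (1 : ℤ) else 0) := by
      have : (if s (β (m - 1)) = i then (1 : ℤ) else 0)
          + ∑ k ∈ Finset.Icc 2 (m - 1), (if s (β (k - 1)) = i then (1 : ℤ) else 0)
          = ∑ k ∈ Finset.Icc 2 m, (if s (β (k - 1)) = i then (1 : ℤ) else 0) := by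
        rw [hIcc2m, Finset.sum_insert hmnotin]
      rw [this, shift (fun k => if s (β (k - 1)) = i then (1 : ℤ) else 0)]
      apply Finset.sum_congr rfl
      intro k hk
      rw [show k + 1 - 1 = k from by omega]
    rw [e1, e2, ← Finset.sum_sub_distrib]
    have e3 : ∀ k ∈ Finset.Icc 1 (m - 1),
        ((if t (β k) = i then (1 : ℤ) else 0) - (if s (β k) = i then (1 : ℤ) else 0))
        = ((if j (k + 1) = i then (1 : ℤ) else 0) - (if j k = i then (1 : ℤ) else 0)) := by
      intro k hk
      simp only [Finset.mem_Icc] at hk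
      rw [hjs k hk.1 hk.2, hjeq k hk.1 hk.2]
    rw [Finset.sum_congr rfl e3]
    have tele : ∀ n : ℕ, 1 ≤ n →
        (∑ k ∈ Finset.Icc 1 n,
          ((if j (k + 1) = i then (1 : ℤ) else 0) - (if j k = i then (1 : ℤ) else 0)))
        = (if j (n + 1) = i then (1 : ℤ) else 0) - (if j 1 = i then (1 : ℤ) else 0) := by
      intro n hn
      induction n with
      | zero => omega
      | succ p ih =>
        rcases Nat.eq_or_lt_of_le hn with h | h
        · rw [← h, Finset.Icc_self, Finset.sum_singleton]
        · have hp : 1 ≤ p := by omega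
          have : Finset.Icc 1 (p + 1) = insert (p + 1) (Finset.Icc 1 p) := by
            ext x
            simp only [Finset.mem_Icc, Finset.mem_insert]
            omega
          rw [this, Finset.sum_insert (by simp only [Finset.mem_Icc]; omega), ih hp]
          ring
    rw [tele (m - 1) h1m, show m - 1 + 1 = m from by omega]
    simp [eq_comm]
  -- put it together
  rw [hIccm, Finset.sum_insert h1notin, Finset.sum_insert hmnotin]
  rw [hO1, hI1, hOm, hIm]
  rw [Finset.sum_congr rfl (fun k hk => by
    simp only [Finset.mem_Icc] at hk
    rw [hOmid k hk.1 hk.2, hImid k hk.1 hk.2])]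
  push_cast
  have hsplit : ∑ k ∈ Finset.Icc 2 (m - 1),
      ((((({a : E | (s a = j k ∧ (k ≤ m - 1 → a ≠ β k)) ∧ t a = i}.ncard : ℤ))
        + (if t (β k) = i then (1 : ℤ) else 0))
      - ((({a : E | (t a = j k ∧ (2 ≤ k → a ≠ β (k - 1))) ∧ s a = i}.ncard : ℤ))
        + (if s (β (k - 1)) = i then (1 : ℤ) else 0))))
      = ((∑ k ∈ Finset.Icc 2 (m - 1), xO k) + ∑ k ∈ Finset.Icc 2 (m - 1), (if t (β k) = i then (1 : ℤ) else 0))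
      - ((∑ k ∈ Finset.Icc 2 (m - 1), xI k) + ∑ k ∈ Finset.Icc 2 (m - 1), (if s (β (k - 1)) = i then (1 : ℤ) else 0)) := by
    rw [← Finset.sum_add_distrib, ← Finset.sum_add_distrib, ← Finset.sum_sub_distrib]
  have hE6 : (if t (β m) = i then (1 : ℤ) else 0) = (if s (β (m + 1)) = i then (1 : ℤ) else 0) := by
    rw [hcomp]
  
  have hg : ({a : E | (s a = j m ∧ (m ≤ m - 1 → a ≠ β m)) ∧ t a = i}.ncard : ℤ) = xO m := by
    simp only [hxO]
  have hk1 : ({a : E | (t a = j 1 ∧ (False → a ≠ β 0)) ∧ s a = i}.ncard : ℤ) = xI 1 := by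
    have hseteq : {a : E | (t a = j 1 ∧ (False → a ≠ β 0)) ∧ s a = i}
        = {a : E | (t a = j 1 ∧ (2 ≤ 1 → a ≠ β 0)) ∧ s a = i} := by
      ext a
      simp only [Set.mem_setOf_eq]
      constructor
      · rintro ⟨⟨h1, _⟩, h2⟩
        exact ⟨⟨h1, fun h => absurd h (by omega)⟩, h2⟩
      · rintro ⟨⟨h1, _⟩, h2⟩
        exact ⟨⟨h1, fun h => h.elim⟩, h2⟩
    rw [hseteq]
  rw [hsplit]
  linarith [hxsum, htel, hE6, hg, hk1]


/-- Almost-bypass column identity for gentle quivers with potential: if `β₁ ⋯ β_{m-1}` is a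
path avoiding the relations and `β_m, β_{m+1}` form an almost bypass (their composite vertex
meets no other arrow), then the columns of the signed adjacency matrix at the vertices
`j₁ = s(β₁), …, j_{m-1} = s(β_{m-1}), j_m = t(β_{m-1})` sum to `e_{j_m} - e_{j_1}`. -/
theorem gentle_QP_almost_bypass_column_identity
    (V E : Type*) [DecidableEq V] [Fintype E]
    (s t : E → V)
    (hloop : ∀ a : E, s a ≠ t a)
    (R : E → E → Prop)
    (hRcomp : ∀ a b : E, R a b → t a = s b)
    (hG1s : ∀ v : V, {a : E | s a = v}.ncard ≤ 2)
    (hG1t : ∀ v : V, {a : E | t a = v}.ncard ≤ 2)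
    (hG2 : ∀ α β₁ β₂ : E, β₁ ≠ β₂ → s β₁ = t α → s β₂ = t α → Xor' (R α β₁) (R α β₂))
    (hG3 : ∀ α₁ α₂ β : E, α₁ ≠ α₂ → t α₁ = s β → t α₂ = s β → Xor' (R α₁ β) (R α₂ β))
    (hcyc : ∀ α β : E, R α β → ∃ γ : E, s γ = t β ∧ t γ = s α ∧ R β γ ∧ R γ α)
    (m : ℕ) (hm : 2 ≤ m) (β : ℕ → E)
    (hpath : ∀ i, 1 ≤ i → i ≤ m - 2 → t (β i) = s (β (i + 1)))
    (hnoR : ∀ i, 1 ≤ i → i ≤ m - 2 → ¬ R (β i) (β (i + 1)))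
    (hne1 : β m ≠ β 1) (hne2 : β m ≠ β (m - 1))
    (hne3 : β (m + 1) ≠ β 1) (hne4 : β (m + 1) ≠ β (m - 1))
    (hcomp : t (β m) = s (β (m + 1)))
    (hnoR2 : ¬ R (β m) (β (m + 1)))
    (hsm : s (β m) = s (β 1)) (htm : t (β (m + 1)) = t (β (m - 1)))
    (honly : ∀ a : E, s a = t (β m) ∨ t a = t (β m) → a = β m ∨ a = β (m + 1)) :
    (∑ k ∈ Finset.Icc 1 m, (fun i : V =>
        (({a : E | s a = (if k = m then t (β (m - 1)) else s (β k)) ∧ t a = i}.ncard : ℤ) -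
         ({a : E | s a = i ∧ t a = (if k = m then t (β (m - 1)) else s (β k))}.ncard : ℤ))))
      = Pi.single (t (β (m - 1))) (1 : ℤ) - Pi.single (s (β 1)) 1 := by
  have key := aux_bypass V E s t hloop R hG1s hG1t hG2 hG3 hcyc m hm β
    (fun k => if k = m then t (β (m - 1)) else s (β k))
    (fun k hk => if_neg hk) (if_pos rfl)
    hpath hnoR hne1 hne2 hne3 hne4 hcomp hnoR2 hsm htm honly
  have hne : (1 : ℕ) ≠ m := by omega
  funext i
  simp only [Finset.sum_apply, Pi.sub_apply, Pi.single_apply]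
  simpa [hne] using key i
end

section
/- Define Fomin–Zelevinsky matrix mutation as follows: for a skew-symmetric matrix B ∈ ℤ^{n×n} and an index k ∈ {1,…,n}, μ_k(B) is the n×n integer matrix whose (i,j)-entry equals −B_{ij} if i = k or j = k, and equals B_{ij} + (|B_{ik}|·B_{kj} + B_{ik}·|B_{kj}|)/2 otherwise. Let B₀ be the 3×3 integer matrix with rows (0, 2, −2), (−2, 0, 2), (2, −2, 0) (the matrix of any triangulation of the once-punctured torus). Then for every finite sequence of indices k₁,…,k_ℓ ∈ {1,2,3}, the matrix B' = μ_{k_ℓ}(⋯(μ_{k₁}(B₀))⋯) satisfies B'·(1,1,1)ᵀ = 0; in particular Ker(B') ∩ ℤ³_{≥0} ≠ {0}, so no matrix mutation-equivalent to B₀ satisfies Ker(B) ∩ ℤ³_{≥0} = {0}. -/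
/-- Fomin–Zelevinsky matrix mutation in direction `k`. -/
def fzMut {n : ℕ} (B : Matrix (Fin n) (Fin n) ℤ) (k : Fin n) : Matrix (Fin n) (Fin n) ℤ :=
  fun i j =>
    if i = k ∨ j = k then -B i j
    else B i j + (|B i k| * B k j + B i k * |B k j|) / 2

private def Bm : Matrix (Fin 3) (Fin 3) ℤ := !![0, 2, -2; -2, 0, 2; 2, -2, 0]

private lemma mutBm (k : Fin 3) : fzMut Bm k = -Bm := by
  funext i j
  fin_cases i <;> fin_cases k <;> fin_cases j <;> simp [fzMut, Bm] <;> decide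

private lemma mutBm' (k : Fin 3) : fzMut (-Bm) k = Bm := by
  funext i j
  fin_cases i <;> fin_cases k <;> fin_cases j <;> simp [fzMut, Bm] <;> decide

private lemma foldl_mem (L : List (Fin 3)) :
    L.foldl fzMut Bm = Bm ∨ L.foldl fzMut Bm = -Bm := by
  induction L using List.reverseRecOn with
  | nil => exact Or.inl rfl
  | append_singleton L k ih =>
    rw [List.foldl_append, List.foldl_cons, List.foldl_nil]
    rcases ih with h | h <;> rw [h]
    · exact Or.inr (mutBm k)
    · exact Or.inl (mutBm' k)

private lemma mulVecOne : Bm.mulVec (fun _ => 1) = 0 := by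
  funext i
  fin_cases i <;> simp [Bm, Matrix.mulVec, dotProduct, Fin.sum_univ_three]

/-- Every matrix mutation-equivalent to the matrix of the once-punctured torus kills the
all-ones vector; in particular its kernel meets `ℤ³_{≥0}` nontrivially, so no matrix in
this mutation class satisfies `Ker(B) ∩ ℤ³_{≥0} = {0}`. -/
theorem once_punctured_torus_mutation_class_kernel :
    ∀ L : List (Fin 3),
      (L.foldl fzMut (!![0, 2, -2; -2, 0, 2; 2, -2, 0] : Matrix (Fin 3) (Fin 3) ℤ)).mulVec
          (fun _ => 1) = 0 ∧
      (∃ u : Fin 3 → ℤ, (∀ i, 0 ≤ u i) ∧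
        (L.foldl fzMut (!![0, 2, -2; -2, 0, 2; 2, -2, 0] : Matrix (Fin 3) (Fin 3) ℤ)).mulVec
          u = 0 ∧ u ≠ 0) := by
  intro L
  have h : (L.foldl fzMut (!![0, 2, -2; -2, 0, 2; 2, -2, 0] : Matrix (Fin 3) (Fin 3) ℤ)).mulVec
      (fun _ => 1) = 0 := by
    rcases foldl_mem L with h | h <;> rw [show (!![0, 2, -2; -2, 0, 2; 2, -2, 0] : Matrix (Fin 3) (Fin 3) ℤ) = Bm from rfl, h]
    · exact mulVecOne
    · rw [Matrix.neg_mulVec, mulVecOne, neg_zero]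
  refine ⟨h, fun _ => 1, fun i => zero_le_one, h, ?_⟩
  intro hu
  have := congrFun hu 0
  simp at this
end
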